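/- arXiv:2301.12785 — 8 statements merged into one kernel-verified Lean document; each statement's English description precedes it below -/
import Mathlib

section
/- A matrix x ∈ ℝ^{m×n} is strongly feasible for the interval transportation problem (i.e., x ∈ F(s,d) for every s ∈ [s̲,s̄] and every d ∈ [d̲,d̄]) if and only if d̲ = d̄ and x satisfies: x ≥ 0, ∑_j x_{ij} ≤ s̲_i for all i, and ∑_i x_{ij} = d̄_j for all j. -/
open Finset

def Feas {m n : ℕ} (s : Fin m → ℝ) (d : Fin n → ℝ) (x : Fin m → Fin n → ℝ) : Prop :=
  (∀ i j, 0 ≤ x i j) ∧ (∀ i, ∑ j, x i j ≤ s i) ∧ (∀ j, ∑ i, x i j = d j)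

def IsOptimal {m n : ℕ} (c : Fin m → Fin n → ℝ) (s : Fin m → ℝ) (d : Fin n → ℝ)
    (x : Fin m → Fin n → ℝ) : Prop :=
  Feas s d x ∧ ∀ x', Feas s d x' → ∑ i, ∑ j, c i j * x i j ≤ ∑ i, ∑ j, c i j * x' i j

theorem stmt_2 {m n : ℕ} (hm : 0 < m) (slo shi : Fin m → ℝ) (dlo dhi : Fin n → ℝ)
    (hs : slo ≤ shi) (hd : dlo ≤ dhi) (x : Fin m → Fin n → ℝ) :
    (∀ s d, slo ≤ s → s ≤ shi → dlo ≤ d → d ≤ dhi → Feas s d x) ↔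
      (dlo = dhi ∧ (∀ i j, 0 ≤ x i j) ∧ (∀ i, ∑ j, x i j ≤ slo i) ∧
        (∀ j, ∑ i, x i j = dhi j)) := by
  constructor
  · intro h
    obtain ⟨h0, h1, h2⟩ := h slo dlo le_rfl hs le_rfl hd
    obtain ⟨_, _, h2'⟩ := h slo dhi le_rfl hs hd le_rfl
    refine ⟨funext fun j => ?_, h0, h1, h2'⟩
    rw [← h2 j, h2' j]
  · rintro ⟨hde, h0, h1, h2⟩ s d hsl hsh hdl hdh
    have hdd : d = dhi := le_antisymm hdh (hde ▸ hdl)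
    exact ⟨h0, fun i => (h1 i).trans (hsl i), fun j => hdd ▸ h2 j⟩
end

section
/- The interval transportation problem is weakly feasible (some scenario has a nonempty feasible set) if and only if ∑_i s̄_i ≥ ∑_j d̲_j. -/
open Finset

theorem stmt_3 {m n : ℕ} (slo shi : Fin m → ℝ) (dlo dhi : Fin n → ℝ)
    (hs0 : 0 ≤ slo) (hs : slo ≤ shi) (hd0 : 0 ≤ dlo) (hd : dlo ≤ dhi) :
    (∃ s d, slo ≤ s ∧ s ≤ shi ∧ dlo ≤ d ∧ d ≤ dhi ∧ ∃ x, Feas s d x) ↔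
      ∑ j, dlo j ≤ ∑ i, shi i := by
  constructor
  · rintro ⟨s, d, hsl, hsh, hdl, hdh, x, hx0, hxr, hxc⟩
    calc ∑ j, dlo j ≤ ∑ j, d j := Finset.sum_le_sum fun j _ => hdl j
      _ = ∑ j, ∑ i, x i j := by simp [hxc]
      _ = ∑ i, ∑ j, x i j := Finset.sum_comm
      _ ≤ ∑ i, s i := Finset.sum_le_sum fun i _ => hxr i
      _ ≤ ∑ i, shi i := Finset.sum_le_sum fun i _ => hsh i
  · intro hle
    set S := ∑ i, shi i with hS
    have hS0 : 0 ≤ S := Finset.sum_nonneg fun i _ => le_trans (hs0 i) (hs i)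
    by_cases hSz : S = 0
    · -- then ∑ dlo ≤ 0, all dlo j = 0
      have hd0' : ∀ j, dlo j = 0 := by
        intro j
        have hsum : ∑ j, dlo j = 0 :=
          le_antisymm (hSz ▸ hle)
            (Finset.sum_nonneg fun j _ => hd0 j)
        have := (Finset.sum_eq_zero_iff_of_nonneg fun j _ => hd0 j).mp hsum
        exact this j (Finset.mem_univ j)
      exact ⟨shi, dlo, hs, le_refl _, le_refl _, hd, fun _ _ => 0,
        fun i j => le_refl 0,
        fun i => by simp; exact le_trans (hs0 i) (hs i),
        fun j => by simp [hd0' j]⟩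
    · have hSpos : 0 < S := lt_of_le_of_ne hS0 (Ne.symm hSz)
      refine ⟨shi, dlo, hs, le_refl _, le_refl _, hd,
        fun i j => shi i * dlo j / S, fun i j => ?_, fun i => ?_, fun j => ?_⟩
      · exact div_nonneg (mul_nonneg (le_trans (hs0 i) (hs i)) (hd0 j)) hS0
      · have : ∑ j, shi i * dlo j / S = shi i * (∑ j, dlo j) / S := by
          rw [← Finset.sum_div, ← Finset.mul_sum]
        rw [this]
        have hshi : 0 ≤ shi i := le_trans (hs0 i) (hs i)
        rw [div_le_iff₀ hSpos]
        calc shi i * ∑ j, dlo j ≤ shi i * S := by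
              exact mul_le_mul_of_nonneg_left hle hshi
          _ = shi i * S := rfl
      · rw [← Finset.sum_div, ← Finset.sum_mul]
        field_simp
        rw [hS]; ring
end

section
/- The interval transportation problem is strongly feasible (every scenario has a nonempty feasible set) if and only if ∑_i s̲_i ≥ ∑_j d̄_j. -/
open Finset

theorem stmt_4 {m n : ℕ} (slo shi : Fin m → ℝ) (dlo dhi : Fin n → ℝ)
    (hs0 : 0 ≤ slo) (hs : slo ≤ shi) (hd0 : 0 ≤ dlo) (hd : dlo ≤ dhi) :
    (∀ s d, slo ≤ s → s ≤ shi → dlo ≤ d → d ≤ dhi → ∃ x, Feas s d x) ↔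
      ∑ j, dhi j ≤ ∑ i, slo i := by
  constructor
  · intro h
    obtain ⟨x, hx0, hxs, hxd⟩ := h slo dhi le_rfl hs hd le_rfl
    calc ∑ j, dhi j = ∑ j, ∑ i, x i j := by simp [hxd]
      _ = ∑ i, ∑ j, x i j := Finset.sum_comm
      _ ≤ ∑ i, slo i := Finset.sum_le_sum fun i _ => hxs i
  · intro h s d hs1 _ hd1 hd2
    have hsnn : ∀ i, 0 ≤ s i := fun i => (hs0 i).trans (hs1 i)
    have hdnn : ∀ j, 0 ≤ d j := fun j => (hd0 j).trans (hd1 j)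
    have hsum : ∑ j, d j ≤ ∑ i, s i := by
      calc ∑ j, d j ≤ ∑ j, dhi j := Finset.sum_le_sum fun j _ => hd2 j
        _ ≤ ∑ i, slo i := h
        _ ≤ ∑ i, s i := Finset.sum_le_sum fun i _ => hs1 i
    set T := ∑ i, s i with hT
    have hTnn : 0 ≤ T := Finset.sum_nonneg fun i _ => hsnn i
    rcases eq_or_lt_of_le hTnn with hT0 | hTpos
    · refine ⟨0, fun i j => le_rfl, fun i => by simpa using hsnn i, fun j => ?_⟩
      have : d j ≤ 0 := by
        have h1 : ∑ j, d j ≤ 0 := by linarith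
        by_contra hc
        push_neg at hc
        have := Finset.single_le_sum (f := d) (fun k _ => hdnn k) (Finset.mem_univ j)
        linarith
      simp [le_antisymm this (hdnn j)]
    · have hTne : T ≠ 0 := ne_of_gt hTpos
      refine ⟨fun i j => s i * d j / T, fun i j => ?_, fun i => ?_, fun j => ?_⟩
      · exact div_nonneg (mul_nonneg (hsnn i) (hdnn j)) hTnn
      · have : ∑ j, s i * d j / T = s i / T * ∑ j, d j := by
          rw [Finset.mul_sum]; congr 1; ext j; ring
        rw [this]
        calc s i / T * ∑ j, d j ≤ s i / T * T :=
              mul_le_mul_of_nonneg_left hsum (div_nonneg (hsnn i) hTnn)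
          _ = s i := div_mul_cancel₀ _ hTne
      · have : ∑ i, s i * d j / T = (∑ i, s i) * (d j / T) := by
          rw [Finset.sum_mul]; congr 1; ext i; ring
        rw [this, ← hT, mul_div_assoc']
        exact mul_div_cancel_left₀ _ hTne
end

section
/- If x is weakly optimal for the interval transportation problem (optimal for some scenario (c',s',d') with c' ∈ [c̲,c̄], s' ∈ [s̲,s̄], d' ∈ [d̲,d̄]), then x is also optimal for the scenario (c', s, d) where s_i = max{s̲_i, ∑_j x_{ij}} and d_j = ∑_i x_{ij}, and moreover s ∈ [s̲,s̄] and d ∈ [d̲,d̄]. -/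
open Finset

theorem stmt_9 {m n : ℕ} (clo chi c' : Fin m → Fin n → ℝ) (slo shi s' : Fin m → ℝ)
    (dlo dhi d' : Fin n → ℝ) (x : Fin m → Fin n → ℝ)
    (hc1 : clo ≤ c') (hc2 : c' ≤ chi) (hs1 : slo ≤ s') (hs2 : s' ≤ shi)
    (hd1 : dlo ≤ d') (hd2 : d' ≤ dhi)
    (hopt : IsOptimal c' s' d' x) :
    slo ≤ (fun i => max (slo i) (∑ j, x i j)) ∧
      (fun i => max (slo i) (∑ j, x i j)) ≤ shi ∧
      dlo ≤ (fun j => ∑ i, x i j) ∧ (fun j => ∑ i, x i j) ≤ dhi ∧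
      IsOptimal c' (fun i => max (slo i) (∑ j, x i j)) (fun j => ∑ i, x i j) x := by
  obtain ⟨⟨hx0, hxs, hxd⟩, hmin⟩ := hopt
  refine ⟨fun i => le_max_left _ _, fun i => max_le (le_trans (hs1 i) (hs2 i))
    (le_trans (hxs i) (hs2 i)), fun j => by simpa [hxd j] using hd1 j, fun j => by simpa [hxd j] using hd2 j,
    ⟨⟨hx0, fun i => le_max_right _ _, fun j => rfl⟩, ?_⟩⟩
  intro x' ⟨hx'0, hx's, hx'd⟩
  apply hmin
  refine ⟨hx'0, fun i => le_trans (hx's i) (max_le (hs1 i) (hxs i)), fun j => ?_⟩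
  exact (hx'd j).trans (hxd j)
end

section
/- Suppose the cost matrix c is fixed (c̲ = c̄ = c). If x is strongly feasible for the interval transportation problem and x is optimal for the scenario (c, s̄, d̄), then x is strongly optimal, i.e., x is optimal for every scenario (c, s, d) with s ∈ [s̲,s̄], d ∈ [d̲,d̄]. -/
open Finset

theorem stmt_10 {m n : ℕ} (c : Fin m → Fin n → ℝ) (slo shi : Fin m → ℝ)
    (dlo dhi : Fin n → ℝ) (hs : slo ≤ shi) (hd : dlo ≤ dhi)
    (x : Fin m → Fin n → ℝ)
    (hsf : ∀ s d, slo ≤ s → s ≤ shi → dlo ≤ d → d ≤ dhi → Feas s d x)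
    (hopt : IsOptimal c shi dhi x) :
    ∀ s d, slo ≤ s → s ≤ shi → dlo ≤ d → d ≤ dhi → IsOptimal c s d x := by
  intro s d hs1 hs2 hd1 hd2
  have hfeas : Feas s d x := hsf s d hs1 hs2 hd1 hd2
  have hfd : Feas s dhi x := hsf s dhi hs1 hs2 hd le_rfl
  have hdeq : d = dhi := by
    funext j
    rw [← hfeas.2.2 j, hfd.2.2 j]
  refine ⟨hfeas, fun x' hx' => hopt.2 x' ?_⟩
  exact ⟨hx'.1, fun i => le_trans (hx'.2.1 i) (hs2 i),
    fun j => by rw [hx'.2.2 j, hdeq]⟩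
end

section
/- The best optimal value of the interval transportation problem equals the optimal value of a single linear program: inf { f(c,s,d) : c ∈ [c̲,c̄], s ∈ [s̲,s̄], d ∈ [d̲,d̄] } = inf { ∑_{i,j} c̲_{ij} x_{ij} : x ≥ 0, ∑_j x_{ij} ≤ s̄_i ∀i, d̲_j ≤ ∑_i x_{ij} ≤ d̄_j ∀j }, provided the interval problem is weakly feasible. -/
open Finset

noncomputable def optVal {m n : ℕ} (c : Fin m → Fin n → ℝ) (s : Fin m → ℝ) (d : Fin n → ℝ) : EReal :=
  sInf ((fun x => ((∑ i, ∑ j, c i j * x i j : ℝ) : EReal)) '' {x | Feas s d x})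

theorem stmt_13 {m n : ℕ} (clo chi : Fin m → Fin n → ℝ) (slo shi : Fin m → ℝ)
    (dlo dhi : Fin n → ℝ)
    (hc0 : ∀ i j, 0 ≤ clo i j) (hc : clo ≤ chi)
    (hs0 : 0 ≤ slo) (hs : slo ≤ shi) (hd0 : 0 ≤ dlo) (hd : dlo ≤ dhi)
    (hwf : ∑ j, dlo j ≤ ∑ i, shi i) :
    sInf {v : EReal | ∃ c s d, clo ≤ c ∧ c ≤ chi ∧ slo ≤ s ∧ s ≤ shi ∧
        dlo ≤ d ∧ d ≤ dhi ∧ v = optVal c s d} =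
      sInf ((fun x => ((∑ i, ∑ j, clo i j * x i j : ℝ) : EReal)) ''
        {x : Fin m → Fin n → ℝ | (∀ i j, 0 ≤ x i j) ∧ (∀ i, ∑ j, x i j ≤ shi i) ∧
          (∀ j, dlo j ≤ ∑ i, x i j ∧ ∑ i, x i j ≤ dhi j)}) := by
  apply le_antisymm
  · apply le_sInf
    rintro v ⟨x, ⟨hx0, hxs, hxd⟩, rfl⟩
    set d : Fin n → ℝ := fun j => ∑ i, x i j with hd'
    have h1 : optVal clo shi d ∈ {v : EReal | ∃ c s d, clo ≤ c ∧ c ≤ chi ∧ slo ≤ s ∧ s ≤ shi ∧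
        dlo ≤ d ∧ d ≤ dhi ∧ v = optVal c s d} :=
      ⟨clo, shi, d, le_refl _, hc, hs, le_refl _, fun j => (hxd j).1, fun j => (hxd j).2, rfl⟩
    refine le_trans (sInf_le h1) ?_
    exact sInf_le ⟨x, ⟨hx0, hxs, fun j => rfl⟩, rfl⟩
  · apply le_sInf
    rintro v ⟨c, s, d, hclo, hchi, hslo, hshi, hdlo, hdhi, rfl⟩
    apply le_sInf
    rintro b ⟨x, ⟨hx0, hxs, hxd⟩, rfl⟩
    refine le_trans (sInf_le ⟨x, ⟨hx0, fun i => le_trans (hxs i) (hshi i),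
      fun j => ⟨hxd j ▸ hdlo j, hxd j ▸ hdhi j⟩⟩, rfl⟩) ?_
    have : (∑ i, ∑ j, clo i j * x i j : ℝ) ≤ ∑ i, ∑ j, c i j * x i j := by
      apply Finset.sum_le_sum; intro i _
      apply Finset.sum_le_sum; intro j _
      exact mul_le_mul_of_nonneg_right (hclo i j) (hx0 i j)
    simpa using EReal.coe_le_coe_iff.mpr this
end

section
/- If the interval transportation problem is strongly feasible, then the worst optimal value sup { f(c,s,d) : c ∈ [c̲,c̄], s ∈ [s̲,s̄], d ∈ [d̲,d̄] } equals the optimal value of the single scenario (c̄, s̲, d̄), i.e., equals inf { ∑_{i,j} c̄_{ij} x_{ij} : x ≥ 0, ∑_j x_{ij} ≤ s̲_i ∀i, ∑_i x_{ij} = d̄_j ∀j }. -/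
open Finset

theorem stmt_14 {m n : ℕ} (clo chi : Fin m → Fin n → ℝ) (slo shi : Fin m → ℝ)
    (dlo dhi : Fin n → ℝ)
    (hc0 : ∀ i j, 0 ≤ clo i j) (hc : clo ≤ chi)
    (hs0 : 0 ≤ slo) (hs : slo ≤ shi) (hd0 : 0 ≤ dlo) (hd : dlo ≤ dhi)
    (hsf : ∑ j, dhi j ≤ ∑ i, slo i) :
    sSup {v : EReal | ∃ c s d, clo ≤ c ∧ c ≤ chi ∧ slo ≤ s ∧ s ≤ shi ∧
        dlo ≤ d ∧ d ≤ dhi ∧ v = optVal c s d} = optVal chi slo dhi := by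
  apply le_antisymm
  · apply sSup_le
    rintro v ⟨c, s, d, hc1, hc2, hs1, hs2, hd1, hd2, rfl⟩
    unfold optVal
    apply le_sInf
    rintro b ⟨x, hx, rfl⟩
    obtain ⟨hx0, hxs, hxd⟩ := hx
    set x' : Fin m → Fin n → ℝ :=
      fun i j => if dhi j = 0 then 0 else x i j * (d j / dhi j) with hx'def
    have hdhi0 : ∀ j, 0 ≤ dhi j := fun j => le_trans (hd0 j) (hd j)
    have hd0' : ∀ j, 0 ≤ d j := fun j => le_trans (hd0 j) (hd1 j)
    have hratio : ∀ j, d j / dhi j ≤ 1 := by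
      intro j
      rcases eq_or_lt_of_le (hdhi0 j) with h | h
      · simp [← h]
      · exact div_le_one_of_le₀ (hd2 j) (hdhi0 j)
    have hx'le : ∀ i j, x' i j ≤ x i j := by
      intro i j
      simp only [hx'def]
      split_ifs with h
      · exact hx0 i j
      · calc x i j * (d j / dhi j) ≤ x i j * 1 :=
              mul_le_mul_of_nonneg_left (hratio j) (hx0 i j)
          _ = x i j := mul_one _
    have hx'0 : ∀ i j, 0 ≤ x' i j := by
      intro i j
      simp only [hx'def]
      split_ifs with h
      · exact le_rfl
      · exact mul_nonneg (hx0 i j) (div_nonneg (hd0' j) (hdhi0 j))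
    have hfeas' : Feas s d x' := by
      refine ⟨hx'0, ?_, ?_⟩
      · intro i
        calc ∑ j, x' i j ≤ ∑ j, x i j := Finset.sum_le_sum fun j _ => hx'le i j
          _ ≤ slo i := hxs i
          _ ≤ s i := hs1 i
      · intro j
        by_cases h : dhi j = 0
        · have hdj : d j = 0 := le_antisymm (h ▸ hd2 j) (hd0' j)
          simp [hx'def, h, hdj]
        · simp only [hx'def, if_neg h]
          rw [← Finset.sum_mul, hxd j, div_eq_inv_mul, ← mul_assoc,
            mul_inv_cancel₀ h, one_mul]
    have hcost : ∑ i, ∑ j, c i j * x' i j ≤ ∑ i, ∑ j, chi i j * x i j := by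
      refine Finset.sum_le_sum fun i _ => Finset.sum_le_sum fun j _ => ?_
      calc c i j * x' i j ≤ chi i j * x' i j :=
            mul_le_mul_of_nonneg_right (hc2 i j) (hx'0 i j)
        _ ≤ chi i j * x i j :=
            mul_le_mul_of_nonneg_left (hx'le i j) (le_trans (hc0 i j) (hc i j))
    refine le_trans (sInf_le ⟨x', hfeas', rfl⟩) ?_
    exact EReal.coe_le_coe_iff.mpr hcost
  · exact le_sSup ⟨chi, slo, dhi, hc, le_refl _, le_refl _, hs, hd, le_refl _, rfl⟩
end

section
/- The set of weakly feasible solutions of the interval transportation problem equals the union ⋃ { F(s,d) : s ∈ [s̲,s̄], d ∈ [d̲,d̄] } and this union equals ⋃ { F(s̄,d) : d ∈ [d̲,d̄] }, i.e., it is determined by the upper supply bound s̄. -/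
open Finset

theorem stmt_18 {m n : ℕ} (slo shi : Fin m → ℝ) (dlo dhi : Fin n → ℝ)
    (hs : slo ≤ shi) (hd : dlo ≤ dhi) :
    {x : Fin m → Fin n → ℝ | ∃ s d, slo ≤ s ∧ s ≤ shi ∧ dlo ≤ d ∧ d ≤ dhi ∧ Feas s d x} =
      {x : Fin m → Fin n → ℝ | ∃ d, dlo ≤ d ∧ d ≤ dhi ∧ Feas shi d x} := by
  ext x
  simp only [Set.mem_setOf_eq]
  constructor
  · rintro ⟨s, d, _, hsle, h1, h2, hpos, hsup, hdem⟩
    exact ⟨d, h1, h2, hpos, fun i => le_trans (hsup i) (hsle i), hdem⟩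
  · rintro ⟨d, h1, h2, hf⟩
    exact ⟨shi, d, hs, le_refl _, h1, h2, hf⟩
end
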